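/- Let G be a graph with a 2-coloring of its vertices in red and blue. Let M_R be the set of red vertices with strictly more blue neighbors than red neighbors, and M_B the set of blue vertices with strictly more red neighbors than blue neighbors. If I is an independent set in G contained in M_R ∪ M_B, then swapping the color of every vertex of I yields a coloring whose cut (number of bichromatic edges) is smaller by at least |I| than the original cut. -/

import Mathlib

open SimpleGraph Finset

variable {V : Type*}

/-- The number of bichromatic edges of `G` under the red/blue coloring `c`
(`true` = red, `false` = blue). -/
def cutB [Fintype V] [DecidableEq V] (G : SimpleGraph V) [DecidableRel G.Adj]
    (c : V → Bool) : ℕ :=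
  (G.edgeFinset.filter (fun e => ¬ (e.map c).IsDiag)).card

/-- The number of neighbors of `v` having color `b`. -/
def nbrColor [Fintype V] [DecidableEq V] (G : SimpleGraph V) [DecidableRel G.Adj]
    (c : V → Bool) (b : Bool) (v : V) : ℕ :=
  ((G.neighborFinset v).filter (fun w => c w = b)).card

/-- `v` is miscolored: red with strictly more blue neighbors than red neighbors,
or blue with strictly more red neighbors than blue neighbors. -/
def Miscolored [Fintype V] [DecidableEq V] (G : SimpleGraph V) [DecidableRel G.Adj]
    (c : V → Bool) (v : V) : Prop :=
  (c v = true ∧ nbrColor G c true v < nbrColor G c false v) ∨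
  (c v = false ∧ nbrColor G c false v < nbrColor G c true v)

/-- The bichromatic subgraph. -/
def bichromG (G : SimpleGraph V) (c : V → Bool) : SimpleGraph V where
  Adj u w := G.Adj u w ∧ c u ≠ c w
  symm := by
    constructor
    intro u w h
    exact ⟨h.1.symm, h.2.symm⟩
  loopless := by
    constructor
    intro v h
    exact G.loopless.irrefl v h.1

instance (G : SimpleGraph V) [DecidableRel G.Adj] (c : V → Bool) :
    DecidableRel (bichromG G c).Adj := fun u w => instDecidableAnd

lemma bichrom_card [Fintype V] [DecidableEq V] (G : SimpleGraph V) [DecidableRel G.Adj]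
    (c : V → Bool) : (bichromG G c).edgeFinset.card = cutB G c := by
  congr 1
  ext e
  induction e with
  | _ u w =>
    rw [mem_edgeFinset]
    simp [cutB, bichromG, mem_edgeFinset, Sym2.map_pair_eq, Sym2.mk_isDiag_iff]

lemma bichrom_degree [Fintype V] [DecidableEq V] (G : SimpleGraph V) [DecidableRel G.Adj]
    (c : V → Bool) (v : V) :
    (bichromG G c).degree v = nbrColor G c (!(c v)) v := by
  unfold nbrColor
  rw [← card_neighborFinset_eq_degree]
  congr 1
  ext w
  rw [mem_neighborFinset]
  simp only [bichromG, mem_neighborFinset, mem_filter, SimpleGraph.mem_neighborFinset,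
    Bool.eq_not_iff]
  constructor
  · rintro ⟨h1, h2⟩; exact ⟨h1, fun h => h2 h.symm⟩
  · rintro ⟨h1, h2⟩; exact ⟨h1, fun h => h2 h.symm⟩

lemma two_mul_cutB [Fintype V] [DecidableEq V] (G : SimpleGraph V) [DecidableRel G.Adj]
    (c : V → Bool) : ∑ v, nbrColor G c (!(c v)) v = 2 * cutB G c := by
  rw [← bichrom_card G c, ← SimpleGraph.sum_degrees_eq_twice_card_edges]
  exact Finset.sum_congr rfl fun v _ => (bichrom_degree G c v).symm

lemma sum_card_swap [DecidableEq V] (s t : Finset V) (Q : V → V → Prop)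
    [∀ v w, Decidable (Q v w)] :
    ∑ v ∈ s, (t.filter (Q v)).card = ∑ w ∈ t, (s.filter (fun v => Q v w)).card := by
  simp only [Finset.card_filter]
  exact Finset.sum_comm

/-- Swapping the colors of an independent set of miscolored vertices decreases
the cut by at least the size of the set. -/
theorem stmt0 [Fintype V] [DecidableEq V] (G : SimpleGraph V) [DecidableRel G.Adj]
    (c : V → Bool) (I : Finset V)
    (hind : ∀ u ∈ I, ∀ w ∈ I, ¬ G.Adj u w)
    (hmis : ∀ v ∈ I, Miscolored G c v) :
    cutB G (fun v => if v ∈ I then !(c v) else c v) + I.card ≤ cutB G c := by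
  set c' : V → Bool := fun v => if v ∈ I then !(c v) else c v with hc'
  -- key per-vertex inequality on I
  have hkey : ∀ v ∈ I, nbrColor G c (c v) v + 1 ≤ nbrColor G c (!(c v)) v := by
    intro v hv
    rcases hmis v hv with ⟨h1, h2⟩ | ⟨h1, h2⟩ <;> rw [h1] <;> simpa using h2
  -- for v ∈ I, the new count equals the old same-color count
  have hI : ∀ v ∈ I, nbrColor G c' (!(c' v)) v = nbrColor G c (c v) v := by
    intro v hv
    unfold nbrColor
    congr 1
    apply Finset.filter_congr
    intro w hw
    rw [mem_neighborFinset] at hw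
    have hwI : w ∉ I := fun hwI => hind v hv w hwI hw
    simp [hc', hwI, hv]
  -- split counts for v ∉ I
  have hsplit : ∀ (d : V → Bool) (v : V),
      ((G.neighborFinset v).filter (fun w => d w = !(d v))).card =
        (I.filter (fun w => G.Adj v w ∧ d w = !(d v))).card +
        ((G.neighborFinset v).filter (fun w => w ∉ I ∧ d w = !(d v))).card := by
    intro d v
    rw [← Finset.card_filter_add_card_filter_not (s := (G.neighborFinset v).filter
      (fun w => d w = !(d v))) (p := fun w => w ∈ I)]
    congr 1
    · rw [Finset.filter_filter]
      congr 1
      ext w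
      simp [mem_neighborFinset]
      tauto
    · rw [Finset.filter_filter]
      congr 1
      ext w
      simp only [mem_filter]
      tauto
  -- abbreviations for the three pieces at a vertex v ∉ I
  set h : V → ℕ := fun v => (I.filter (fun w => G.Adj v w ∧ c w = c v)).card with hh
  set g : V → ℕ := fun v => (I.filter (fun w => G.Adj v w ∧ c w = !(c v))).card with hg
  set q : V → ℕ := fun v =>
    ((G.neighborFinset v).filter (fun w => w ∉ I ∧ c w = !(c v))).card with hq
  have hout' : ∀ v ∉ I, nbrColor G c' (!(c' v)) v = h v + q v := by
    intro v hv
    have hcv : c' v = c v := by simp [hc', hv]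
    unfold nbrColor
    rw [hsplit c' v]
    congr 1
    · refine congrArg Finset.card (Finset.filter_congr ?_)
      intro w hw
      rw [hcv]
      have hcw : c' w = !(c w) := by simp [hc', hw]
      rw [hcw]
      simp [Bool.not_inj_iff]
    · refine congrArg Finset.card (Finset.filter_congr ?_)
      intro w _
      rw [hcv]
      constructor
      · rintro ⟨h1, h2⟩
        refine ⟨h1, ?_⟩
        simpa [hc', h1] using h2
      · rintro ⟨h1, h2⟩
        refine ⟨h1, ?_⟩
        simpa [hc', h1] using h2
  have hout : ∀ v ∉ I, nbrColor G c (!(c v)) v = g v + q v := by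
    intro v _
    unfold nbrColor
    rw [hsplit c v]
  -- double counting over Iᶜ × I
  have S1 : ∑ v ∈ Iᶜ, h v = ∑ w ∈ I, nbrColor G c (c w) w := by
    rw [hh]
    rw [sum_card_swap Iᶜ I (fun v w => G.Adj v w ∧ c w = c v)]
    refine Finset.sum_congr rfl fun w hw => ?_
    unfold nbrColor
    congr 1
    ext v
    simp only [mem_filter, Finset.mem_compl, mem_neighborFinset]
    constructor
    · rintro ⟨_, h2, h3⟩; exact ⟨h2.symm, h3.symm⟩
    · rintro ⟨h2, h3⟩
      exact ⟨fun hvI => hind w hw v hvI h2, h2.symm, h3.symm⟩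
  have S2 : ∑ v ∈ Iᶜ, g v = ∑ w ∈ I, nbrColor G c (!(c w)) w := by
    rw [hg]
    rw [sum_card_swap Iᶜ I (fun v w => G.Adj v w ∧ c w = !(c v))]
    refine Finset.sum_congr rfl fun w hw => ?_
    unfold nbrColor
    congr 1
    ext v
    simp only [mem_filter, Finset.mem_compl, mem_neighborFinset, Bool.eq_not_iff]
    constructor
    · rintro ⟨_, h2, h3⟩; exact ⟨h2.symm, fun h => h3 h.symm⟩
    · rintro ⟨h2, h3⟩
      exact ⟨fun hvI => hind w hw v hvI h2, h2.symm, fun h => h3 h.symm⟩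
  -- sum over I
  have sumI : ∑ v ∈ I, nbrColor G c' (!(c' v)) v + I.card ≤
      ∑ v ∈ I, nbrColor G c (!(c v)) v := by
    calc ∑ v ∈ I, nbrColor G c' (!(c' v)) v + I.card
        = ∑ v ∈ I, (nbrColor G c (c v) v + 1) := by
          rw [Finset.sum_add_distrib, Finset.sum_const, smul_eq_mul, mul_one]
          congr 1
          exact Finset.sum_congr rfl hI
      _ ≤ ∑ v ∈ I, nbrColor G c (!(c v)) v := Finset.sum_le_sum hkey
  -- sum over Iᶜ
  have sumIc : ∑ v ∈ Iᶜ, nbrColor G c' (!(c' v)) v + I.card ≤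
      ∑ v ∈ Iᶜ, nbrColor G c (!(c v)) v := by
    have e1 : ∑ v ∈ Iᶜ, nbrColor G c' (!(c' v)) v = ∑ v ∈ Iᶜ, h v + ∑ v ∈ Iᶜ, q v := by
      rw [← Finset.sum_add_distrib]
      exact Finset.sum_congr rfl fun v hv => hout' v (Finset.mem_compl.mp hv)
    have e2 : ∑ v ∈ Iᶜ, nbrColor G c (!(c v)) v = ∑ v ∈ Iᶜ, g v + ∑ v ∈ Iᶜ, q v := by
      rw [← Finset.sum_add_distrib]
      exact Finset.sum_congr rfl fun v hv => hout v (Finset.mem_compl.mp hv)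
    have e3 : ∑ v ∈ Iᶜ, h v + I.card ≤ ∑ v ∈ Iᶜ, g v := by
      rw [S1, S2]
      calc ∑ w ∈ I, nbrColor G c (c w) w + I.card
          = ∑ w ∈ I, (nbrColor G c (c w) w + 1) := by
            rw [Finset.sum_add_distrib, Finset.sum_const, smul_eq_mul, mul_one]
        _ ≤ ∑ w ∈ I, nbrColor G c (!(c w)) w := Finset.sum_le_sum hkey
    omega
  have total : ∑ v, nbrColor G c' (!(c' v)) v + 2 * I.card ≤
      ∑ v, nbrColor G c (!(c v)) v := by
    rw [← Finset.sum_add_sum_compl I (fun v => nbrColor G c' (!(c' v)) v),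
      ← Finset.sum_add_sum_compl I (fun v => nbrColor G c (!(c v)) v)]
    omega
  rw [two_mul_cutB, two_mul_cutB] at total
  omega
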